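/- Lie derivative acts on inner products by the commutator: let V, W : Fin n → Λ be vector fields on ℝ^{0|n} with all components V α, W α odd elements of Λ (so V, W are even vector fields), and define U : Fin n → Λ by U γ := Σ_β ( V β * ∂_β(W γ) − W β * ∂_β(V γ) ). Then V^↑ ∘ W_↑ − W_↑ ∘ V^↑ = U_↑ as linear endomorphisms of P. -/

import Mathlib

open TensorProduct

noncomputable section

/-- The Grassmann algebra on `n` odd generators `ξ^α`. -/
abbrev Lam (n : ℕ) : Type := ExteriorAlgebra ℝ (Fin n → ℝ)

/-- The odd coordinate `ξ^α`, i.e. the generator `e_α = ι (Pi.single α 1)`. -/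
def gen {n : ℕ} (α : Fin n) : Lam n := ExteriorAlgebra.ι ℝ (Pi.single α 1)

/-- The odd partial derivative `∂/∂ξ^α`: left contraction with the `α`-th
coordinate functional, the unique antiderivation sending `e_β` to `δ_{αβ}`. -/
def pd {n : ℕ} (α : Fin n) : Lam n →ₗ[ℝ] Lam n :=
  CliffordAlgebra.contractLeft (Q := (0 : QuadraticForm ℝ (Fin n → ℝ))) (LinearMap.proj α)

/-- The algebra of (pseudo)differential forms on `ℝ^{0|n}`:
polynomials in the even fiber coordinates `y^α` with Grassmann coefficients. -/
abbrev Forms (n : ℕ) : Type := MvPolynomial (Fin n) ℝ ⊗[ℝ] Lam n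

/-- The de Rham differential `Q = y^α ∂_{ξ^α}`. -/
def deRham (n : ℕ) : Forms n →ₗ[ℝ] Forms n :=
  ∑ α : Fin n, TensorProduct.map (LinearMap.mulLeft ℝ (MvPolynomial.X α)) (pd α)


/-- The inner product `i_V = V^α ∂_{y^α}` of the vector field `V = V^α ∂_{ξ^α}`. -/
def innerProd {n : ℕ} (V : Fin n → Lam n) : Forms n →ₗ[ℝ] Forms n :=
  ∑ α : Fin n, TensorProduct.map (MvPolynomial.pderiv α).toLinearMap
    (LinearMap.mulLeft ℝ (V α))

/-- The Lie derivative `L_V = V^α ∂_{ξ^α} + Q(V^α) ∂_{y^α}` of an even vector field. -/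
def lieDerEven {n : ℕ} (V : Fin n → Lam n) : Forms n →ₗ[ℝ] Forms n :=
  (∑ α : Fin n, TensorProduct.map LinearMap.id (LinearMap.mulLeft ℝ (V α) ∘ₗ pd α)) +
  ∑ α : Fin n, ∑ β : Fin n, TensorProduct.map
    (LinearMap.mulLeft ℝ (MvPolynomial.X β) ∘ₗ (MvPolynomial.pderiv α).toLinearMap)
    (LinearMap.mulLeft ℝ (pd β (V α)))

namespace LieAux

open CliffordAlgebra

variable {n : ℕ}

local notation "Q0" => (0 : QuadraticForm ℝ (Fin n → ℝ))

lemma iota_anticomm (m : Fin n → ℝ) {w : Lam n} (hw : w ∈ evenOdd Q0 1) :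
    ι Q0 m * w = -(w * ι Q0 m) := by
  induction w, hw using odd_induction with
  | ι v => exact ι_mul_ι_comm_of_isOrtho (QuadraticMap.IsOrtho.all _ _)
  | add x y hx hy ihx ihy => rw [mul_add, add_mul, ihx, ihy, neg_add]
  | ι_mul_ι_mul m₁ m₂ x hx ih =>
    have h1 : ι Q0 m * ι Q0 m₁ = -(ι Q0 m₁ * ι Q0 m) :=
      ι_mul_ι_comm_of_isOrtho (QuadraticMap.IsOrtho.all _ _)
    have h2 : ι Q0 m * ι Q0 m₂ = -(ι Q0 m₂ * ι Q0 m) :=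
      ι_mul_ι_comm_of_isOrtho (QuadraticMap.IsOrtho.all _ _)
    calc ι Q0 m * (ι Q0 m₁ * ι Q0 m₂ * x)
        = (ι Q0 m * ι Q0 m₁) * (ι Q0 m₂ * x) := by noncomm_ring [mul_assoc]
      _ = -(ι Q0 m₁ * ((ι Q0 m * ι Q0 m₂) * x)) := by rw [h1]; noncomm_ring [mul_assoc]
      _ = ι Q0 m₁ * (ι Q0 m₂ * (ι Q0 m * x)) := by rw [h2]; noncomm_ring [mul_assoc]
      _ = -(ι Q0 m₁ * ι Q0 m₂ * x * ι Q0 m) := by rw [ih]; noncomm_ring [mul_assoc]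

/-- For odd `w`: `w * (ι m * y) = -(ι m * (w * y))`. -/
lemma swap_iota {w : Lam n} (hw : w ∈ evenOdd Q0 1) (m : Fin n → ℝ) (y : Lam n) :
    w * (ι Q0 m * y) = -(ι Q0 m * (w * y)) := by
  have h : w * ι Q0 m = -(ι Q0 m * w) := by rw [iota_anticomm m hw, neg_neg]
  rw [← mul_assoc, h, neg_mul, mul_assoc]

lemma odd_anticomm {v w : Lam n} (hv : v ∈ evenOdd Q0 1) (hw : w ∈ evenOdd Q0 1) :
    v * w = -(w * v) := by
  induction v, hv using odd_induction with
  | ι m => exact iota_anticomm m hw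
  | add x y hx hy ihx ihy => rw [add_mul, mul_add, ihx, ihy, neg_add]
  | ι_mul_ι_mul m₁ m₂ x hx ih =>
    calc ι Q0 m₁ * ι Q0 m₂ * x * w
        = ι Q0 m₁ * (ι Q0 m₂ * (x * w)) := by rw [mul_assoc, mul_assoc]
      _ = -(ι Q0 m₁ * (ι Q0 m₂ * (w * x))) := by rw [ih]; simp [mul_neg]
      _ = -(w * (ι Q0 m₁ * ι Q0 m₂ * x)) := by
          rw [mul_assoc, swap_iota hw m₁, swap_iota hw m₂]; simp [mul_neg]

lemma even_comm {a w : Lam n} (ha : a ∈ evenOdd Q0 0) (hw : w ∈ evenOdd Q0 1) :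
    a * w = w * a := by
  induction a, ha using even_induction with
  | algebraMap r => exact Algebra.commutes r w
  | add x y hx hy ihx ihy => rw [add_mul, mul_add, ihx, ihy]
  | ι_mul_ι_mul m₁ m₂ x hx ih =>
    calc ι Q0 m₁ * ι Q0 m₂ * x * w
        = ι Q0 m₁ * (ι Q0 m₂ * (x * w)) := by rw [mul_assoc, mul_assoc]
      _ = ι Q0 m₁ * (ι Q0 m₂ * (w * x)) := by rw [ih]
      _ = w * (ι Q0 m₁ * ι Q0 m₂ * x) := by
          rw [mul_assoc, swap_iota hw m₁, swap_iota hw m₂]; simp [mul_neg]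

lemma pd_odd_mem {α : Fin n} {w : Lam n} (hw : w ∈ evenOdd Q0 1) :
    pd α w ∈ evenOdd Q0 0 := by
  induction w, hw using odd_induction with
  | ι v =>
    rw [pd, contractLeft_ι]
    exact SetLike.algebraMap_mem_graded _ _
  | add x y hx hy ihx ihy => rw [map_add]; exact Submodule.add_mem _ ihx ihy
  | ι_mul_ι_mul m₁ m₂ x hx ih =>
    rw [pd, mul_assoc, contractLeft_ι_mul, contractLeft_ι_mul]
    refine Submodule.sub_mem _ (Submodule.smul_mem _ _ ?_) ?_
    · exact (zero_add (0 : ZMod 2) ▸ SetLike.mul_mem_graded (ι_mem_evenOdd_one Q0 m₂) hx :)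
    · rw [mul_sub]
      refine Submodule.sub_mem _ ?_ ?_
      · rw [mul_smul_comm]
        exact Submodule.smul_mem _ _
          (zero_add (0 : ZMod 2) ▸ SetLike.mul_mem_graded (ι_mem_evenOdd_one Q0 m₁) hx :)
      · rw [← mul_assoc]
        exact (zero_add (0 : ZMod 2) ▸
          SetLike.mul_mem_graded (ι_mul_ι_mem_evenOdd_zero Q0 m₁ m₂) ih :)

lemma pd_mul_odd (α : Fin n) {w : Lam n} (hw : w ∈ evenOdd Q0 1) (x : Lam n) :
    pd α (w * x) = pd α w * x - w * pd α x := by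
  induction w, hw using odd_induction with
  | ι v =>
    rw [pd, contractLeft_ι_mul, contractLeft_ι, Algebra.algebraMap_eq_smul_one, smul_mul_assoc,
      one_mul]
  | add x' y hx hy ihx ihy =>
    rw [add_mul, map_add, ihx, ihy, map_add, add_mul, add_mul]; abel
  | ι_mul_ι_mul m₁ m₂ y hy ih =>
    simp only [pd, mul_assoc] at ih ⊢
    rw [contractLeft_ι_mul, contractLeft_ι_mul, ih, contractLeft_ι_mul, contractLeft_ι_mul]
    simp only [mul_sub, sub_mul, smul_mul_assoc, mul_smul_comm, smul_sub, mul_assoc]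
    abel

lemma pderiv_comm' (α γ : Fin n) (p : MvPolynomial (Fin n) ℝ) :
    MvPolynomial.pderiv α (MvPolynomial.pderiv γ p) =
      MvPolynomial.pderiv γ (MvPolynomial.pderiv α p) := by
  induction p using MvPolynomial.induction_on with
  | C a => simp
  | add p q hp hq => simp [hp, hq]
  | mul_X p j hp =>
    by_cases h1 : j = α
    · subst h1
      by_cases h2 : j = γ
      · subst h2; simp [MvPolynomial.pderiv_mul, hp]
      · simp [MvPolynomial.pderiv_mul, MvPolynomial.pderiv_X, Pi.single_apply, h2, hp]
        try ring
    · by_cases h2 : j = γ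
      · subst h2
        simp [MvPolynomial.pderiv_mul, MvPolynomial.pderiv_X, Pi.single_apply, h1, hp]
        try ring
      · simp [MvPolynomial.pderiv_mul, MvPolynomial.pderiv_X, Pi.single_apply, h1, h2, hp]
        try ring

lemma innerProd_tmul (W : Fin n → Lam n) (p : MvPolynomial (Fin n) ℝ) (x : Lam n) :
    innerProd W (p ⊗ₜ[ℝ] x) =
      ∑ γ : Fin n, (MvPolynomial.pderiv γ p) ⊗ₜ[ℝ] (W γ * x) := by
  simp [innerProd, TensorProduct.map_tmul]

lemma innerProd_add (a b : Fin n → Lam n) :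
    innerProd (fun γ => a γ + b γ) = innerProd a + innerProd b := by
  apply TensorProduct.ext'
  intro p x
  simp [innerProd_tmul, add_mul, tmul_add, Finset.sum_add_distrib]

lemma partA (V W : Fin n → Lam n)
    (hV : ∀ α, V α ∈ evenOdd Q0 1) (hW : ∀ α, W α ∈ evenOdd Q0 1) :
    (∑ α : Fin n, TensorProduct.map LinearMap.id (LinearMap.mulLeft ℝ (V α) ∘ₗ pd α)) ∘ₗ
        innerProd W -
      innerProd W ∘ₗ
        (∑ α : Fin n, TensorProduct.map LinearMap.id (LinearMap.mulLeft ℝ (V α) ∘ₗ pd α)) =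
      innerProd (fun γ => ∑ α : Fin n, V α * pd α (W γ)) := by
  apply TensorProduct.ext'
  intro p x
  simp only [LinearMap.sub_apply, LinearMap.comp_apply, innerProd_tmul, map_sum,
    LinearMap.sum_apply, TensorProduct.map_tmul, LinearMap.mulLeft_apply, LinearMap.id_coe,
    id_eq, LinearMap.coe_comp, Function.comp_apply]
  conv_lhs => rw [Finset.sum_comm]
  simp only [← Finset.sum_sub_distrib]
  conv_rhs => simp only [Finset.sum_mul, tmul_sum]
  conv_rhs => rw [Finset.sum_comm]
  refine Finset.sum_congr rfl fun α _ => Finset.sum_congr rfl fun γ _ => ?_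
  rw [← tmul_sub]
  congr 1
  rw [pd_mul_odd α (hW γ) x, mul_sub, ← mul_assoc (W γ), odd_anticomm (hW γ) (hV α)]
  noncomm_ring [mul_assoc]

lemma partB (V W : Fin n → Lam n)
    (hV : ∀ α, V α ∈ evenOdd Q0 1) (hW : ∀ α, W α ∈ evenOdd Q0 1) :
    (∑ α : Fin n, ∑ β : Fin n, TensorProduct.map
        (LinearMap.mulLeft ℝ (MvPolynomial.X β) ∘ₗ (MvPolynomial.pderiv α).toLinearMap)
        (LinearMap.mulLeft ℝ (pd β (V α)))) ∘ₗ innerProd W -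
      innerProd W ∘ₗ (∑ α : Fin n, ∑ β : Fin n, TensorProduct.map
        (LinearMap.mulLeft ℝ (MvPolynomial.X β) ∘ₗ (MvPolynomial.pderiv α).toLinearMap)
        (LinearMap.mulLeft ℝ (pd β (V α)))) =
      innerProd (fun γ => ∑ β : Fin n, -(W β * pd β (V γ))) := by
  classical
  apply TensorProduct.ext'
  intro p x
  simp only [LinearMap.sub_apply, LinearMap.comp_apply, innerProd_tmul, map_sum,
    LinearMap.sum_apply, TensorProduct.map_tmul, LinearMap.mulLeft_apply, LinearMap.coe_comp,
    Function.comp_apply, Derivation.coeFn_coe]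
  have swap3 : ∀ (f : Fin n → Fin n → Fin n → Forms n),
      (∑ a : Fin n, ∑ b : Fin n, ∑ c : Fin n, f a b c) =
        ∑ b : Fin n, ∑ c : Fin n, ∑ a : Fin n, f a b c := by
    intro f
    rw [Finset.sum_comm]
    exact Finset.sum_congr rfl fun b _ => Finset.sum_comm
  rw [swap3 fun γ α β => (MvPolynomial.X β *
      MvPolynomial.pderiv α (MvPolynomial.pderiv γ p)) ⊗ₜ[ℝ] (pd β (V α) * (W γ * x))]
  calc
    (∑ α : Fin n, ∑ β : Fin n, ∑ γ : Fin n,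
        (MvPolynomial.X β * MvPolynomial.pderiv α (MvPolynomial.pderiv γ p)) ⊗ₜ[ℝ]
          (pd β (V α) * (W γ * x))) -
      ∑ α : Fin n, ∑ β : Fin n, ∑ γ : Fin n,
        (MvPolynomial.pderiv γ (MvPolynomial.X β * MvPolynomial.pderiv α p)) ⊗ₜ[ℝ]
          (W γ * (pd β (V α) * x))
        = ∑ α : Fin n, ∑ β : Fin n, ∑ γ : Fin n,
            -(if β = γ then (MvPolynomial.pderiv α p) ⊗ₜ[ℝ] (W γ * (pd β (V α) * x)) else 0) := by
      simp only [← Finset.sum_sub_distrib]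
      refine Finset.sum_congr rfl fun α _ => Finset.sum_congr rfl fun β _ =>
        Finset.sum_congr rfl fun γ _ => ?_
      have hc : pd β (V α) * W γ = W γ * pd β (V α) := even_comm (pd_odd_mem (hV α)) (hW γ)
      rw [MvPolynomial.pderiv_mul, MvPolynomial.pderiv_X, Pi.single_apply, ite_mul, one_mul,
        zero_mul, add_tmul, ite_tmul, pderiv_comm' α γ p,
        show pd β (V α) * (W γ * x) = W γ * (pd β (V α) * x) from by
          rw [← mul_assoc, hc, mul_assoc]]
      abel
    _ = -∑ α : Fin n, ∑ β : Fin n,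
          (MvPolynomial.pderiv α p) ⊗ₜ[ℝ] (W β * (pd β (V α) * x)) := by
      simp only [Finset.sum_neg_distrib, Finset.sum_ite_eq, Finset.mem_univ, if_true]
    _ = ∑ γ : Fin n, (MvPolynomial.pderiv γ p) ⊗ₜ[ℝ]
          ((∑ β : Fin n, -(W β * pd β (V γ))) * x) := by
      simp only [Finset.sum_mul, tmul_sum, neg_mul, tmul_neg, mul_assoc,
        Finset.sum_neg_distrib]

end LieAux

/-- The Lie derivative acts on inner products by the commutator: for even vector fields
`V, W` (all components odd in `Λ`) and the commutator field
`U γ = Σ_β (V β * ∂_β(W γ) - W β * ∂_β(V γ))`, one has `V^↑ ∘ W_↑ - W_↑ ∘ V^↑ = U_↑`. -/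
theorem lieDer_innerProd_commutator (n : ℕ) (hn : 1 ≤ n) (V W : Fin n → Lam n)
    (hV : ∀ α, V α ∈ CliffordAlgebra.evenOdd (0 : QuadraticForm ℝ (Fin n → ℝ)) 1)
    (hW : ∀ α, W α ∈ CliffordAlgebra.evenOdd (0 : QuadraticForm ℝ (Fin n → ℝ)) 1) :
    lieDerEven V ∘ₗ innerProd W - innerProd W ∘ₗ lieDerEven V =
      innerProd (fun γ => ∑ β : Fin n, (V β * pd β (W γ) - W β * pd β (V γ))) := by

  have hA := LieAux.partA V W hV hW
  have hB := LieAux.partB V W hV hW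
  rw [lieDerEven, LinearMap.add_comp, LinearMap.comp_add]
  have h := congrArg₂ (· + ·) hA hB
  rw [← LieAux.innerProd_add] at h
  refine Eq.trans (by abel) (h.trans ?_)
  congr 1
  funext γ
  simp [sub_eq_add_neg, Finset.sum_add_distrib]
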